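/- Let $d = \gcd(n,k)$, $\delta \in \mathbb{F}_{p^n}$ with $T_d^n(\delta) = 1$, $L, L'$ $p$-linearized polynomials over $\mathbb{F}_p$ with $L \circ L'(X) = X - X^{p^k}$, and $a \in \mathbb{F}_{p^n}$. Define $y = \sum_{i=0}^{n/d - 2} \sum_{j=i+1}^{n/d - 1} \delta^{p^{kj}} U(a)^{p^{ki}}$, where $U$ is the linearized $p$-associate of $u = l'/\gcd(l', t_d^k)$. If $U(T_d^n(a)) = 0$, then $L(L'(y)) = U(a)$. -/

import Mathlib

open Polynomial

noncomputable def Tpoly (p l k : ℕ) : Polynomial (ZMod p) :=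
  ∑ i ∈ Finset.range (k / l), X ^ p ^ (l * i)

noncomputable def Spoly (p l k : ℕ) : Polynomial (ZMod p) :=
  ∑ i ∈ Finset.range (k / l), C ((-1 : ZMod p) ^ i) * X ^ p ^ (l * i)

noncomputable def linAssoc (p : ℕ) (l : Polynomial (ZMod p)) : Polynomial (ZMod p) :=
  ∑ i ∈ l.support, C (l.coeff i) * X ^ p ^ i

lemma sum_range_mul_mod {M : Type*} [AddCommMonoid M] (m e : ℕ) (hm : 0 < m)
    (he : Nat.Coprime e m) (f : ℕ → M) :
    ∑ j ∈ Finset.range m, f ((e * j) % m) = ∑ j ∈ Finset.range m, f j := by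
  haveI : NeZero m := ⟨hm.ne'⟩
  have hu : IsUnit (e : ZMod m) := (ZMod.isUnit_iff_coprime e m).2 he
  set e' : ℕ := ((e : ZMod m)⁻¹).val with he'
  have hmul : (e' * e) % m = 1 % m := by
    have h1 : ((e' * e : ℕ) : ZMod m) = ((1 : ℕ) : ZMod m) := by
      push_cast [he']
      rw [ZMod.natCast_val, ZMod.cast_id, mul_comm]
      exact ZMod.mul_inv_of_unit _ hu
    exact (ZMod.natCast_eq_natCast_iff _ _ _).mp h1
  have hmul2 : (e * e') % m = 1 % m := by rwa [mul_comm] at hmul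
  have cancel : ∀ x z : ℕ, (x * z) % m = 1 % m → ∀ a, a < m → (x * ((z * a) % m)) % m = a := by
    intro x z hxz a ham
    have h1 : x * ((z * a) % m) ≡ x * (z * a) [MOD m] := (Nat.mod_modEq _ m).mul_left x
    have h3 : x * z * a ≡ 1 * a [MOD m] := Nat.ModEq.mul_right a hxz
    have : x * ((z * a) % m) ≡ a [MOD m] := by
      calc x * ((z * a) % m) ≡ x * (z * a) [MOD m] := h1
        _ = x * z * a := (mul_assoc _ _ _).symm
        _ ≡ 1 * a [MOD m] := h3
        _ = a := one_mul a
    simpa [Nat.ModEq, Nat.mod_eq_of_lt ham] using this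
  refine Finset.sum_bij' (fun a _ => (e * a) % m) (fun a _ => (e' * a) % m) ?_ ?_ ?_ ?_ ?_
  · intro a _; exact Finset.mem_range.2 (Nat.mod_lt _ hm)
  · intro a _; exact Finset.mem_range.2 (Nat.mod_lt _ hm)
  · intro a ha; exact cancel e' e hmul a (Finset.mem_range.1 ha)
  · intro a ha; exact cancel e e' hmul2 a (Finset.mem_range.1 ha)
  · intro a _; rfl

variable (p : ℕ) [Fact p.Prime] (n : ℕ)

lemma gf_pow_card (hn : 0 < n) (c : GaloisField p n) : c ^ p ^ n = c := by
  haveI : Fintype (GaloisField p n) := Fintype.ofFinite _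
  have h := FiniteField.pow_card c
  rwa [← Nat.card_eq_fintype_card, GaloisField.card p n hn.ne'] at h

lemma gf_pow_card_pow (hn : 0 < n) (c : GaloisField p n) (t : ℕ) : c ^ (p ^ n) ^ t = c := by
  induction t with
  | zero => simp
  | succ t ih => rw [pow_succ, pow_mul, ih, gf_pow_card p n hn]

lemma gf_pow_mod (hn : 0 < n) (c : GaloisField p n) (s : ℕ) :
    c ^ p ^ s = c ^ p ^ (s % n) := by
  conv_lhs => rw [← Nat.div_add_mod s n]
  rw [pow_add, pow_mul p n (s / n), pow_mul c ((p ^ n) ^ (s / n)) (p ^ (s % n)),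
    gf_pow_card_pow p n hn]

lemma aeval_linAssoc_zero (v : Polynomial (ZMod p)) :
    aeval (0 : GaloisField p n) (linAssoc p v) = 0 := by
  simp only [linAssoc, map_sum, map_mul, aeval_C, map_pow, aeval_X]
  refine Finset.sum_eq_zero fun i _ => ?_
  rw [zero_pow (pow_ne_zero i (Nat.Prime.ne_zero Fact.out)), mul_zero]

lemma aeval_linAssoc_add (v : Polynomial (ZMod p)) (x y : GaloisField p n) :
    aeval (x + y) (linAssoc p v) = aeval x (linAssoc p v) + aeval y (linAssoc p v) := by
  simp only [linAssoc, map_sum, map_mul, aeval_C, map_pow, aeval_X]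
  rw [← Finset.sum_add_distrib]
  refine Finset.sum_congr rfl fun i _ => ?_
  rw [add_pow_char_pow, mul_add]

lemma aeval_linAssoc_sum {ι : Type*} (v : Polynomial (ZMod p)) (s : Finset ι)
    (f : ι → GaloisField p n) :
    aeval (∑ i ∈ s, f i) (linAssoc p v) = ∑ i ∈ s, aeval (f i) (linAssoc p v) := by
  classical
  induction s using Finset.induction_on with
  | empty => simpa using aeval_linAssoc_zero p n v
  | insert _ _ hx ih =>
      rw [Finset.sum_insert hx, Finset.sum_insert hx, aeval_linAssoc_add, ih]

lemma aeval_linAssoc_pow (v : Polynomial (ZMod p)) (x : GaloisField p n) (s : ℕ) :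
    aeval (x ^ p ^ s) (linAssoc p v) = aeval x (linAssoc p v) ^ p ^ s := by
  simp only [linAssoc, map_sum, map_mul, aeval_C, map_pow, aeval_X]
  conv_rhs => rw [← iterateFrobenius_def (R := GaloisField p n) p s]
  rw [map_sum]
  refine Finset.sum_congr rfl fun i _ => ?_
  rw [map_mul, iterateFrobenius_def, iterateFrobenius_def, ← pow_mul, ← pow_mul,
    mul_comm (p ^ s) (p ^ i)]
  congr 1
  rw [← map_pow]
  congr 1
  exact (ZMod.pow_card_pow _).symm

lemma final_algebra {F : Type*} [CommRing F] (m : ℕ) (hm : 0 < m) (D S : ℕ → F)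
    (hA : ∑ j ∈ Finset.range m, D j = 1) (hB : ∑ i ∈ Finset.range m, S i = 0)
    (hD : D m = D 0) :
    (∑ i ∈ Finset.range (m - 1), ∑ j ∈ Finset.Ico (i + 1) m, D j * S i)
      - (∑ i ∈ Finset.range (m - 1), ∑ j ∈ Finset.Ico (i + 1) m, D (j + 1) * S (i + 1))
      = S 0 := by
  set P : ℕ → F := fun i => ∑ j ∈ Finset.Ico (i + 1) m, D j with hP
  have h1 : ∀ i ∈ Finset.range (m - 1),
      ∑ j ∈ Finset.Ico (i + 1) m, D j * S i = P i * S i :=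
    fun i _ => (Finset.sum_mul _ _ _).symm
  have h2 : ∀ i ∈ Finset.range (m - 1),
      ∑ j ∈ Finset.Ico (i + 1) m, D (j + 1) * S (i + 1) = (P (i + 1) + D 0) * S (i + 1) := by
    intro i hi
    have hi1 : i + 1 ≤ m - 1 := by have := Finset.mem_range.1 hi; omega
    have key : ∑ j ∈ Finset.Ico (i + 1) m, D (j + 1) = P (i + 1) + D 0 := by
      have hm' : m = (m - 1) + 1 := by omega
      rw [hm', Finset.sum_Ico_succ_top (by omega : i + 1 ≤ m - 1), ← hm', hD]
      have hs : ∑ j ∈ Finset.Ico (i + 1) (m - 1), D (j + 1)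
          = ∑ j ∈ Finset.Ico (i + 1 + 1) m, D j := by
        rw [Finset.sum_Ico_eq_sum_range, Finset.sum_Ico_eq_sum_range,
          show (m - 1) - (i + 1) = m - (i + 1 + 1) by omega]
        exact Finset.sum_congr rfl fun t _ => congrArg D (by omega)
      rw [hs]
    rw [← Finset.sum_mul, key]
  rw [Finset.sum_congr rfl h1, Finset.sum_congr rfl h2]
  have h3 : ∑ i ∈ Finset.range (m - 1), (P (i + 1) + D 0) * S (i + 1)
      = ∑ i ∈ Finset.range (m - 1), P (i + 1) * S (i + 1)
        + D 0 * ∑ i ∈ Finset.range (m - 1), S (i + 1) := by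
    rw [Finset.mul_sum, ← Finset.sum_add_distrib]
    exact Finset.sum_congr rfl fun i _ => by ring
  rw [h3]
  have h4 : ∑ i ∈ Finset.range (m - 1), S (i + 1) = - S 0 := by
    have h5 := Finset.sum_range_succ' S (m - 1)
    rw [show (m - 1) + 1 = m by omega, hB] at h5
    exact eq_neg_of_add_eq_zero_left h5.symm
  rw [h4]
  have h6 : ∑ i ∈ Finset.range (m - 1), P i * S i
      - ∑ i ∈ Finset.range (m - 1), P (i + 1) * S (i + 1)
      = P 0 * S 0 - P (m - 1) * S (m - 1) := by
    rw [← Finset.sum_sub_distrib]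
    exact Finset.sum_range_sub' (fun i => P i * S i) (m - 1)
  have h7 : P (m - 1) = 0 := by
    simp only [hP]
    rw [show (m - 1) + 1 = m by omega]
    simp
  have h8 : P 0 + D 0 = 1 := by
    simp only [hP]
    rw [← hA, Finset.range_eq_Ico, Finset.sum_eq_sum_Ico_succ_bot hm]
    simp [add_comm]
  linear_combination h6 + S 0 * h8 - S (m - 1) * h7

theorem stmt14 (p : ℕ) [Fact p.Prime] (n k : ℕ) (hn : 0 < n) (hk : 0 < k)
    (d : ℕ) (hd : d = Nat.gcd n k)
    (l l' : Polynomial (ZMod p))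
    (h : (linAssoc p l).comp (linAssoc p l') = X - X ^ p ^ k)
    (t w u : Polynomial (ZMod p))
    (ht : t = ∑ i ∈ Finset.range (k / d), X ^ (d * i))
    (hw : w = gcd l' t) (hu : u = l' / w)
    (δ : GaloisField p n) (hδ : aeval δ (Tpoly p d n) = 1)
    (a : GaloisField p n)
    (ha : aeval (aeval a (Tpoly p d n)) (linAssoc p u) = 0)
    (y : GaloisField p n)
    (hy : y = ∑ i ∈ Finset.range (n / d - 1), ∑ j ∈ Finset.Ico (i + 1) (n / d),
        δ ^ p ^ (k * j) * (aeval a (linAssoc p u)) ^ p ^ (k * i)) :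
    aeval (aeval y (linAssoc p l')) (linAssoc p l) = aeval a (linAssoc p u) := by
  have hpd : 0 < d := by
    rw [hd]; exact Nat.gcd_pos_of_pos_left _ hn
  have hdvd_n : d ∣ n := hd ▸ Nat.gcd_dvd_left n k
  have hdvd_k : d ∣ k := hd ▸ Nat.gcd_dvd_right n k
  set m := n / d with hmdef
  set e := k / d with hedef
  set b := aeval a (linAssoc p u) with hbdef
  have hdm : d * m = n := Nat.mul_div_cancel' hdvd_n
  have hde : d * e = k := Nat.mul_div_cancel' hdvd_k
  have hm : 0 < m := Nat.div_pos (Nat.le_of_dvd hn hdvd_n) hpd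
  have hcop : Nat.Coprime e m := by
    have h2 := Nat.coprime_div_gcd_div_gcd (m := n) (n := k) (hd ▸ hpd)
    rw [← hd] at h2
    exact h2.symm
  -- reduce the goal to y - y ^ p ^ k = b
  rw [← aeval_comp, h, map_sub, map_pow, aeval_X]
  -- reindexing k-powers to d-powers
  have conv1 : ∀ (c : GaloisField p n) (j : ℕ),
      c ^ p ^ (k * j) = c ^ p ^ (d * ((e * j) % m)) := by
    intro c j
    have hnat : (k * j) % n = d * ((e * j) % m) := by
      rw [← hde, ← hdm, mul_assoc, Nat.mul_mod_mul_left]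
    rw [gf_pow_mod p n hn c (k * j), hnat]
  have reidx : ∀ c : GaloisField p n,
      ∑ j ∈ Finset.range m, c ^ p ^ (k * j) = ∑ j ∈ Finset.range m, c ^ p ^ (d * j) := by
    intro c
    rw [show (∑ j ∈ Finset.range m, c ^ p ^ (k * j))
        = ∑ j ∈ Finset.range m, c ^ p ^ (d * ((e * j) % m)) from
      Finset.sum_congr rfl fun j _ => conv1 c j]
    exact sum_range_mul_mod m e hm hcop (fun j => c ^ p ^ (d * j))
  have hA : ∑ j ∈ Finset.range m, δ ^ p ^ (k * j) = 1 := by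
    rw [reidx δ]
    have h1 := hδ
    simp only [Tpoly, map_sum, map_pow, aeval_X] at h1
    rw [← hmdef] at h1
    exact h1
  have hTa : aeval a (Tpoly p d n) = ∑ i ∈ Finset.range m, a ^ p ^ (d * i) := by
    simp only [Tpoly, map_sum, map_pow, aeval_X]
    rfl
  have hB : ∑ i ∈ Finset.range m, b ^ p ^ (k * i) = 0 := by
    rw [reidx b]
    have h2 : aeval (aeval a (Tpoly p d n)) (linAssoc p u)
        = ∑ i ∈ Finset.range m, b ^ p ^ (d * i) := by
      rw [hTa, aeval_linAssoc_sum]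
      refine Finset.sum_congr rfl fun i _ => ?_
      rw [hbdef]
      exact aeval_linAssoc_pow p n u a (d * i)
    rw [← h2, ha]
  have hSm : ∀ c : GaloisField p n, c ^ p ^ (k * m) = c := by
    intro c
    have hkm : k * m = n * e := by rw [← hde, ← hdm]; ring
    rw [hkm, pow_mul p n e, gf_pow_card_pow p n hn]
  -- Frobenius applied to y
  have hyk : y ^ p ^ k = ∑ i ∈ Finset.range (m - 1), ∑ j ∈ Finset.Ico (i + 1) m,
      δ ^ p ^ (k * (j + 1)) * b ^ p ^ (k * (i + 1)) := by
    rw [hy]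
    conv_lhs => rw [← iterateFrobenius_def (R := GaloisField p n) p k]
    rw [map_sum]
    refine Finset.sum_congr rfl fun i _ => ?_
    rw [map_sum]
    refine Finset.sum_congr rfl fun j _ => ?_
    rw [map_mul, iterateFrobenius_def, iterateFrobenius_def, ← pow_mul, ← pow_mul,
      ← pow_add, ← pow_add, show k * j + k = k * (j + 1) by ring,
      show k * i + k = k * (i + 1) by ring]
  have hD0 : δ ^ p ^ (k * m) = δ ^ p ^ (k * 0) := by
    rw [hSm δ, mul_zero, pow_zero, pow_one]
  have hfin := final_algebra m hm (fun j => δ ^ p ^ (k * j)) (fun i => b ^ p ^ (k * i))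
    hA hB hD0
  rw [hyk, hy]
  simpa using hfin
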